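/- Let α, β be real numbers with 0 < α < 1, 0 < β < 1, and α + β > 1. Then there is a constant C depending only on α, β, q such that for every nonzero n ∈ F_q[t], ∑_{x,y ∈ F_q[t] nonzero, x+y=n} q^{-α deg x} · q^{-β deg y} ≤ C · q^{-(α+β-1) deg n}. -/

import Mathlib

open Polynomial Finset

private lemma geom_finset_le (r : ℝ) (h0 : 0 ≤ r) (h1 : r < 1) (S : Finset ℕ) :
    ∑ j ∈ S, r ^ j ≤ (1 - r)⁻¹ := by
  calc ∑ j ∈ S, r ^ j ≤ ∑' j : ℕ, r ^ j :=
        Summable.sum_le_tsum S (fun i _ => pow_nonneg h0 i) (summable_geometric_of_lt_one h0 h1)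
    _ = (1 - r)⁻¹ := tsum_geometric_of_lt_one h0 h1

private lemma card_natDegree_le {F : Type*} [Field F] [Fintype F] (d : ℕ)
    (T : Finset (Polynomial F)) (hT : ∀ x ∈ T, x.natDegree ≤ d) :
    (T.card : ℝ) ≤ (Fintype.card F : ℝ) ^ (d + 1) := by
  classical
  have h : T.card ≤ Fintype.card (Fin (d + 1) → F) := by
    apply Finset.card_le_card_of_injOn (fun x (i : Fin (d + 1)) => x.coeff i)
      (fun x _ => Finset.mem_univ _)
    intro x hx y hy hxy
    ext j
    by_cases hj : j ≤ d
    · exact congrFun hxy ⟨j, Nat.lt_succ_of_le hj⟩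
    · rw [Polynomial.coeff_eq_zero_of_natDegree_lt, Polynomial.coeff_eq_zero_of_natDegree_lt]
      · exact lt_of_le_of_lt (hT y hy) (by omega)
      · exact lt_of_le_of_lt (hT x hx) (by omega)
  have h2 : Fintype.card (Fin (d + 1) → F) = Fintype.card F ^ (d + 1) := by
    rw [Fintype.card_fun, Fintype.card_fin]
  calc (T.card : ℝ) ≤ (Fintype.card (Fin (d + 1) → F) : ℝ) := by exact_mod_cast h
    _ = (Fintype.card F : ℝ) ^ (d + 1) := by rw [h2]; push_cast; ring

private lemma dist_sum_le (ρ : ℝ) (h0 : 0 ≤ ρ) (h1 : ρ < 1) (m : ℕ) (I : Finset ℕ) :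
    ∑ k ∈ I, ρ ^ (Nat.dist m k) ≤ 2 * (1 - ρ)⁻¹ := by
  classical
  rw [← Finset.sum_filter_add_sum_filter_not I (fun k => k ≤ m)]
  have h₁ : ∑ k ∈ I.filter (fun k => k ≤ m), ρ ^ (Nat.dist m k) ≤ (1 - ρ)⁻¹ := by
    have : ∑ k ∈ I.filter (fun k => k ≤ m), ρ ^ (Nat.dist m k)
        = ∑ j ∈ (I.filter (fun k => k ≤ m)).image (fun k => m - k), ρ ^ j := by
      rw [Finset.sum_image]
      · apply Finset.sum_congr rfl
        intro k hk
        simp only [Finset.mem_filter] at hk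
        rw [Nat.dist_eq_sub_of_le_right hk.2]
      · intro a ha b hb hab
        simp only [Finset.mem_coe, Finset.mem_filter] at ha hb hab
        omega
    rw [this]
    exact geom_finset_le ρ h0 h1 _
  have h₂ : ∑ k ∈ I.filter (fun k => ¬ k ≤ m), ρ ^ (Nat.dist m k) ≤ (1 - ρ)⁻¹ := by
    have : ∑ k ∈ I.filter (fun k => ¬ k ≤ m), ρ ^ (Nat.dist m k)
        = ∑ j ∈ (I.filter (fun k => ¬ k ≤ m)).image (fun k => k - m), ρ ^ j := by
      rw [Finset.sum_image]
      · apply Finset.sum_congr rfl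
        intro k hk
        simp only [Finset.mem_filter] at hk
        rw [Nat.dist_eq_sub_of_le (by omega)]
      · intro a ha b hb hab
        simp only [Finset.mem_coe, Finset.mem_filter] at ha hb hab
        omega
    rw [this]
    exact geom_finset_le ρ h0 h1 _
  linarith

/-- Lemma (basic 1, part ii): for `0 < α, β < 1` with `α + β > 1`, there is a
constant `C = C(α, β, q)` such that for every nonzero `n ∈ F_q[t]`,
`∑_{x + y = n, x y ≠ 0} q^{-α deg x} q^{-β deg y} ≤ C q^{-(α+β-1) deg n}`. -/
theorem stmt_10 (F : Type*) [Field F] [Fintype F] (α β : ℝ)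
    (hα : 0 < α) (hα1 : α < 1) (hβ : 0 < β) (hβ1 : β < 1) (hαβ : 1 < α + β) :
    ∃ C : ℝ, 0 < C ∧ ∀ (n : Polynomial F), n ≠ 0 →
      ∑' xy : {xy : Polynomial F × Polynomial F //
          xy.1 ≠ 0 ∧ xy.2 ≠ 0 ∧ xy.1 + xy.2 = n},
          (Fintype.card F : ℝ) ^ (-α * (((xy : Polynomial F × Polynomial F).1.natDegree : ℝ))) *
            (Fintype.card F : ℝ) ^ (-β * (((xy : Polynomial F × Polynomial F).2.natDegree : ℝ)))
        ≤ C * (Fintype.card F : ℝ) ^ (-(α + β - 1) * (n.natDegree : ℝ)) := by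
  classical
  set Q : ℝ := (Fintype.card F : ℝ) with hQdef
  have hQ1 : 1 < Q := by
    rw [hQdef]
    exact_mod_cast (Fintype.one_lt_card : 1 < Fintype.card F)
  have hQ0 : 0 < Q := by linarith
  set γ : ℝ := min (1 - α) (min (1 - β) (α + β - 1)) with hγdef
  have hγα : γ ≤ 1 - α := min_le_left _ _
  have hγβ : γ ≤ 1 - β := le_trans (min_le_right _ _) (min_le_left _ _)
  have hγαβ : γ ≤ α + β - 1 := le_trans (min_le_right _ _) (min_le_right _ _)
  have hγ0 : 0 < γ := by
    apply lt_min (by linarith) (lt_min (by linarith) (by linarith))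
  set ρ : ℝ := Q ^ (-γ) with hρdef
  have hρ0 : 0 ≤ ρ := Real.rpow_nonneg hQ0.le _
  have hρ1 : ρ < 1 := Real.rpow_lt_one_of_one_lt_of_neg hQ1 (by linarith)
  have hCpos : 0 < 4 * Q * (1 - ρ)⁻¹ :=
    mul_pos (by linarith) (inv_pos.mpr (by linarith))
  refine ⟨4 * Q * (1 - ρ)⁻¹, hCpos, ?_⟩
  intro n hn
  set m : ℕ := n.natDegree with hmdef
  -- the key finite-sum estimate
  have key : ∀ T : Finset (Polynomial F),
      ∑ x ∈ T, Q ^ (-α * (x.natDegree : ℝ)) * Q ^ (-β * (((n - x).natDegree : ℝ)))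
        ≤ 4 * Q * (1 - ρ)⁻¹ * Q ^ (-(α + β - 1) * (m : ℝ)) := by
    intro T
    set K : Polynomial F → ℕ := fun x => min x.natDegree (n - x).natDegree with hKdef
    set W : ℕ → ℝ := fun k =>
      Q ^ (-(α + β - 1) * (m : ℝ)) * ρ ^ (Nat.dist m k) * Q ^ (-(k : ℝ)) with hWdef
    have hWnn : ∀ k, 0 ≤ W k := by
      intro k
      apply mul_nonneg (mul_nonneg (Real.rpow_nonneg hQ0.le _) (pow_nonneg hρ0 _))
        (Real.rpow_nonneg hQ0.le _)
    -- pointwise bound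
    have hpt : ∀ x : Polynomial F,
        Q ^ (-α * (x.natDegree : ℝ)) * Q ^ (-β * (((n - x).natDegree : ℝ))) ≤ W (K x) := by
      intro x
      set d : ℕ := x.natDegree with hddef
      set e : ℕ := (n - x).natDegree with hedef
      have hρpow : ∀ j : ℕ, ρ ^ j = Q ^ (-γ * (j : ℝ)) := by
        intro j
        rw [hρdef, ← Real.rpow_natCast (Q ^ (-γ)) j, ← Real.rpow_mul hQ0.le]
      have hW : W (K x) = Q ^ (-(α + β - 1) * (m : ℝ) + (-γ) * ((Nat.dist m (K x) : ℕ) : ℝ)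
          + (-((K x : ℕ) : ℝ))) := by
        calc W (K x) = Q ^ (-(α + β - 1) * (m : ℝ)) * Q ^ (-γ * ((Nat.dist m (K x) : ℕ) : ℝ))
              * Q ^ (-((K x : ℕ) : ℝ)) := by simp only [hWdef]; rw [hρpow]
          _ = _ := by rw [← Real.rpow_add hQ0, ← Real.rpow_add hQ0]
      have hL : Q ^ (-α * (d : ℝ)) * Q ^ (-β * (e : ℝ))
          = Q ^ (-α * (d : ℝ) + -β * (e : ℝ)) := (Real.rpow_add hQ0 _ _).symm
      rw [hL, hW, Real.rpow_le_rpow_left_iff hQ1]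
      rcases Nat.lt_trichotomy d m with hdm | hdm | hdm
      · -- d < m : e = m, K x = d, dist = m - d
        have he : e = m := Polynomial.natDegree_sub_eq_left_of_natDegree_lt hdm
        have hK : K x = d := by
          have h0 : K x = min d e := rfl
          rw [h0, he]; omega
        rw [hK, he, Nat.dist_eq_sub_of_le_right hdm.le]
        have hcast : ((m - d : ℕ) : ℝ) = (m : ℝ) - (d : ℝ) := by
          push_cast [Nat.cast_sub hdm.le]; ring
        rw [hcast]
        have hdm' : (d : ℝ) ≤ (m : ℝ) := by exact_mod_cast hdm.le
        nlinarith [mul_nonneg (by linarith : (0:ℝ) ≤ 1 - α - γ) (by linarith : (0:ℝ) ≤ (m:ℝ) - d)]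
      · -- d = m : e ≤ m, K x = e, dist = m - e
        have he : e ≤ m := by
          have := Polynomial.natDegree_sub_le n x
          rw [← hedef, ← hddef] at this
          omega
        have hK : K x = e := by
          have h0 : K x = min d e := rfl
          rw [h0]; omega
        rw [hK, Nat.dist_eq_sub_of_le_right he]
        have hcast : ((m - e : ℕ) : ℝ) = (m : ℝ) - (e : ℝ) := by
          push_cast [Nat.cast_sub he]; ring
        rw [hcast]
        have he' : (e : ℝ) ≤ (m : ℝ) := by exact_mod_cast he
        have hd' : (d : ℝ) = (m : ℝ) := by exact_mod_cast hdm
        nlinarith [mul_nonneg (by linarith : (0:ℝ) ≤ 1 - β - γ) (by linarith : (0:ℝ) ≤ (m:ℝ) - e)]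
      · -- m < d : e = d, K x = d, dist = d - m
        have he : e = d := Polynomial.natDegree_sub_eq_right_of_natDegree_lt hdm
        have hK : K x = d := by
          have h0 : K x = min d e := rfl
          rw [h0, he]; omega
        rw [hK, Nat.dist_eq_sub_of_le hdm.le]
        have hcast : ((d - m : ℕ) : ℝ) = (d : ℝ) - (m : ℝ) := by
          push_cast [Nat.cast_sub hdm.le]; ring
        rw [hcast, he]
        have hdm' : (m : ℝ) ≤ (d : ℝ) := by exact_mod_cast hdm.le
        nlinarith [mul_nonneg (by linarith : (0:ℝ) ≤ α + β - 1 - γ)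
          (by linarith : (0:ℝ) ≤ (d:ℝ) - m)]
    -- fiber count
    have hcard : ∀ k : ℕ, ((T.filter (fun x => K x = k)).card : ℝ) ≤ 2 * Q ^ (k + 1) := by
      intro k
      have hsub : T.filter (fun x => K x = k)
          ⊆ T.filter (fun x => x.natDegree = k) ∪ T.filter (fun x => (n - x).natDegree = k) := by
        intro x hx
        simp only [Finset.mem_filter, Finset.mem_union] at hx ⊢
        rcases hx with ⟨hxT, hKx⟩
        have hKx' : min x.natDegree (n - x).natDegree = k := hKx
        rcases le_total x.natDegree (n - x).natDegree with h | h
        · exact Or.inl ⟨hxT, by rw [min_eq_left h] at hKx'; exact hKx'⟩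
        · exact Or.inr ⟨hxT, by rw [min_eq_right h] at hKx'; exact hKx'⟩
      have h1 : ((T.filter (fun x => x.natDegree = k)).card : ℝ) ≤ Q ^ (k + 1) := by
        rw [hQdef]
        apply card_natDegree_le
        intro x hx
        simp only [Finset.mem_filter] at hx
        omega
      have h2 : ((T.filter (fun x => (n - x).natDegree = k)).card : ℝ) ≤ Q ^ (k + 1) := by
        have himg : (T.filter (fun x => (n - x).natDegree = k)).card
            = ((T.filter (fun x => (n - x).natDegree = k)).image (fun x => n - x)).card := by
          rw [Finset.card_image_of_injOn]
          intro a _ b _ hab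
          exact sub_right_injective hab
        rw [himg, hQdef]
        apply card_natDegree_le
        intro y hy
        simp only [Finset.mem_image, Finset.mem_filter] at hy
        obtain ⟨x, ⟨_, hxk⟩, rfl⟩ := hy
        omega
      calc ((T.filter (fun x => K x = k)).card : ℝ)
          ≤ ((T.filter (fun x => x.natDegree = k) ∪
              T.filter (fun x => (n - x).natDegree = k)).card : ℝ) := by
            exact_mod_cast Finset.card_le_card hsub
        _ ≤ ((T.filter (fun x => x.natDegree = k)).card : ℝ)
            + ((T.filter (fun x => (n - x).natDegree = k)).card : ℝ) := by
            exact_mod_cast Finset.card_union_le _ _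
        _ ≤ 2 * Q ^ (k + 1) := by linarith
    -- combine
    calc ∑ x ∈ T, Q ^ (-α * (x.natDegree : ℝ)) * Q ^ (-β * (((n - x).natDegree : ℝ)))
        ≤ ∑ x ∈ T, W (K x) := Finset.sum_le_sum (fun x _ => hpt x)
      _ = ∑ k ∈ T.image K, (T.filter (fun x => K x = k)).card • W k := Finset.sum_comp W K
      _ = ∑ k ∈ T.image K, ((T.filter (fun x => K x = k)).card : ℝ) * W k := by
          apply Finset.sum_congr rfl; intro k _; rw [nsmul_eq_mul]
      _ ≤ ∑ k ∈ T.image K, (2 * Q ^ (k + 1)) * W k :=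
          Finset.sum_le_sum (fun k _ => mul_le_mul_of_nonneg_right (hcard k) (hWnn k))
      _ = ∑ k ∈ T.image K, 2 * Q * Q ^ (-(α + β - 1) * (m : ℝ)) * ρ ^ (Nat.dist m k) := by
          apply Finset.sum_congr rfl
          intro k _
          rw [hWdef]
          have hpow : (Q : ℝ) ^ (k + 1) * Q ^ (-(k : ℝ)) = Q := by
            rw [← Real.rpow_natCast Q (k + 1), ← Real.rpow_add hQ0]
            have h1 : (((k + 1 : ℕ) : ℝ) + -(k : ℝ)) = 1 := by push_cast; ring
            rw [h1, Real.rpow_one]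
          calc 2 * Q ^ (k + 1) * (Q ^ (-(α + β - 1) * (m : ℝ)) * ρ ^ (Nat.dist m k)
                * Q ^ (-(k : ℝ)))
              = 2 * (Q ^ (k + 1) * Q ^ (-(k : ℝ))) * Q ^ (-(α + β - 1) * (m : ℝ))
                * ρ ^ (Nat.dist m k) := by ring
            _ = 2 * Q * Q ^ (-(α + β - 1) * (m : ℝ)) * ρ ^ (Nat.dist m k) := by rw [hpow]
      _ = 2 * Q * Q ^ (-(α + β - 1) * (m : ℝ)) * ∑ k ∈ T.image K, ρ ^ (Nat.dist m k) := by
          rw [Finset.mul_sum]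
      _ ≤ 2 * Q * Q ^ (-(α + β - 1) * (m : ℝ)) * (2 * (1 - ρ)⁻¹) := by
          apply mul_le_mul_of_nonneg_left (dist_sum_le ρ hρ0 hρ1 m _)
          positivity
      _ = 4 * Q * (1 - ρ)⁻¹ * Q ^ (-(α + β - 1) * (m : ℝ)) := by ring
  -- reduce the tsum to finite sums
  apply tsum_le_of_sum_le' (mul_nonneg hCpos.le (Real.rpow_nonneg hQ0.le _))
  intro s
  have hinj : ∀ i ∈ s, ∀ j ∈ s,
      (i : Polynomial F × Polynomial F).1 = (j : Polynomial F × Polynomial F).1 → i = j := by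
    intro i _ j _ hij
    have hi2 : (i : Polynomial F × Polynomial F).2 = n - (i : Polynomial F × Polynomial F).1 :=
      eq_sub_of_add_eq' i.2.2.2
    have hj2 : (j : Polynomial F × Polynomial F).2 = n - (j : Polynomial F × Polynomial F).1 :=
      eq_sub_of_add_eq' j.2.2.2
    apply Subtype.ext
    apply Prod.ext hij
    rw [hi2, hj2, hij]
  have hsum : ∑ i ∈ s, Q ^ (-α * (((i : Polynomial F × Polynomial F).1.natDegree : ℝ)))
        * Q ^ (-β * (((i : Polynomial F × Polynomial F).2.natDegree : ℝ)))
      = ∑ x ∈ s.image (fun i => i.val.1),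
          Q ^ (-α * (x.natDegree : ℝ)) * Q ^ (-β * (((n - x).natDegree : ℝ))) := by
    rw [Finset.sum_image hinj]
    apply Finset.sum_congr rfl
    intro i _
    have hi2 : n - (i : Polynomial F × Polynomial F).1 = (i : Polynomial F × Polynomial F).2 :=
      (eq_sub_of_add_eq' i.2.2.2).symm
    rw [hi2]
  rw [hsum]
  exact key _
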